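/- Let V and Z be vector spaces over a field K, β : V × V → Z an alternating bilinear map defining a reduced Heisenberg algebra h(V,Z,β) (with bracket [(v,x),(w,y)] = (0, β(v,w))), and A an abelian Lie algebra over K. Then the automorphisms of the Lie algebra h(V,Z,β) × A are precisely the maps (v,z,a) ↦ (σ(v), σ'(z) + τ(v) + ζ(a), α(a) + ξ(v)) where σ is a linear bijection of V with β(σ(u),σ(v)) = σ'(β(u,v)) for some σ' ∈ GL(Z), τ ∈ Hom(V,Z), ζ ∈ Hom(A,Z), α ∈ GL(A), ξ ∈ Hom(V,A). -/

import Mathlib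

variable {K V Z A : Type*} [Field K] [AddCommGroup V] [Module K V]
  [AddCommGroup Z] [Module K Z] [AddCommGroup A] [Module K A]

/-- The Lie ring structure of the generalized Heisenberg algebra h(V,Z,β) times an
abelian Lie algebra A: the bracket is [(v,x,a),(w,y,b)] = (0, β(v,w), 0). -/
def heisLieRing (β : V →ₗ[K] V →ₗ[K] Z) (halt : ∀ v : V, β v v = 0) :
    LieRing (V × Z × A) :=
  { (inferInstance : AddCommGroup (V × Z × A)) with
    bracket := fun p q => (0, β p.1 q.1, 0)
    add_lie := by
      intro x y z
      show ((0 : V), β (x.1 + y.1) z.1, (0 : A))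
        = ((0 : V), β x.1 z.1, (0 : A)) + ((0 : V), β y.1 z.1, (0 : A))
      simp [Prod.ext_iff]
    lie_add := by
      intro x y z
      show ((0 : V), β x.1 (y.1 + z.1), (0 : A))
        = ((0 : V), β x.1 y.1, (0 : A)) + ((0 : V), β x.1 z.1, (0 : A))
      simp [Prod.ext_iff]
    lie_self := by
      intro x
      show ((0 : V), β x.1 x.1, (0 : A)) = 0
      simp [halt, Prod.ext_iff]
    leibniz_lie := by
      intro x y z
      show ((0 : V), β x.1 (0 : V), (0 : A))
        = ((0 : V), β (0 : V) z.1, (0 : A)) + ((0 : V), β y.1 (0 : V), (0 : A))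
      simp [Prod.ext_iff] }

/-- The K-Lie algebra structure on h(V,Z,β) × A. -/
def heisLieAlgebra (β : V →ₗ[K] V →ₗ[K] Z) (halt : ∀ v : V, β v v = 0) :
    letI := heisLieRing (A := A) β halt
    LieAlgebra K (V × Z × A) :=
  letI := heisLieRing (A := A) β halt
  { (inferInstance : Module K (V × Z × A)) with
    lie_smul := by
      intro t x y
      show ((0 : V), β x.1 (t • y.1), (0 : A)) = t • ((0 : V), β x.1 y.1, (0 : A))
      simp [Prod.ext_iff] }

section Aux

variable (β : V →ₗ[K] V →ₗ[K] Z)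

/-- f maps the center {0}×Z×A into itself. -/
private lemma heis_fact1 (hred : ∀ v : V, (∀ w : V, β v w = 0) → v = 0)
    (f : (V × Z × A) ≃ₗ[K] (V × Z × A))
    (hf : ∀ p q : V × Z × A, f (0, β p.1 q.1, 0) = (0, β (f p).1 (f q).1, 0))
    (z : Z) (a : A) : (f (0, z, a)).1 = 0 := by
  apply hred
  intro w
  have h := hf (0, z, a) (f.symm (w, 0, 0))
  have h1 : β (((0 : V), z, a).1) ((f.symm ((w : V), (0 : Z), (0 : A))).1) = 0 := by
    simp
  rw [h1] at h
  have h0 : f ((0 : V), (0 : Z), (0 : A)) = 0 := by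
    have : ((0 : V), (0 : Z), (0 : A)) = (0 : V × Z × A) := rfl
    rw [this, map_zero]
  rw [h0, LinearEquiv.apply_symm_apply] at h
  have := congrArg (fun p : V × Z × A => p.2.1) h
  simpa using this.symm

/-- f maps the derived algebra {0}×Z×{0} into itself. -/
private lemma heis_fact2
    (hspan : Submodule.span K {z : Z | ∃ u w : V, β u w = z} = ⊤)
    (f : (V × Z × A) ≃ₗ[K] (V × Z × A))
    (hf : ∀ p q : V × Z × A, f (0, β p.1 q.1, 0) = (0, β (f p).1 (f q).1, 0))
    (z : Z) : (f (0, z, 0)).2.2 = 0 := by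
  set g : Z →ₗ[K] A :=
    ((LinearMap.snd K Z A).comp (LinearMap.snd K V (Z × A))).comp
      (f.toLinearMap.comp
        ((LinearMap.inr K V (Z × A)).comp (LinearMap.inl K Z A))) with hgdef
  have hle : Submodule.span K {z : Z | ∃ u w : V, β u w = z} ≤ LinearMap.ker g := by
    rw [Submodule.span_le]
    rintro _ ⟨u, w, rfl⟩
    have h := hf (u, 0, 0) (w, 0, 0)
    simp only [LinearMap.mem_ker, hgdef, LinearMap.comp_apply, SetLike.mem_coe]
    show (f ((0 : V), β u w, (0 : A))).2.2 = 0
    have h' : β (((u : V), (0 : Z), (0 : A)).1) (((w : V), (0 : Z), (0 : A)).1) = β u w := rfl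
    rw [h'] at h
    rw [h]
  rw [hspan] at hle
  have hg0 : g = 0 := LinearMap.ker_eq_top.mp (top_le_iff.mp hle)
  have := LinearMap.congr_fun hg0 z
  simpa [hgdef] using this

/-- Decomposition of a bracket-preserving automorphism. -/
private lemma heis_decomp
    (hspan : Submodule.span K {z : Z | ∃ u w : V, β u w = z} = ⊤)
    (hred : ∀ v : V, (∀ w : V, β v w = 0) → v = 0)
    (f : (V × Z × A) ≃ₗ[K] (V × Z × A))
    (hf : ∀ p q : V × Z × A, f (0, β p.1 q.1, 0) = (0, β (f p).1 (f q).1, 0))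
    (v : V) (z : Z) (a : A) :
    f (v, z, a) = ((f (v, 0, 0)).1,
      (f (0, z, 0)).2.1 + (f (v, 0, 0)).2.1 + (f (0, 0, a)).2.1,
      (f (0, 0, a)).2.2 + (f (v, 0, 0)).2.2) := by
  have hsplit : ((v, z, a) : V × Z × A) = (v, 0, 0) + (0, z, 0) + (0, 0, a) := by
    simp [Prod.ext_iff]
  rw [hsplit, map_add, map_add]
  have h1 := heis_fact1 β hred f hf z 0
  have h1' := heis_fact1 β hred f hf 0 a
  have h2 := heis_fact2 β hspan f hf z
  ext <;> simp [h1, h1', h2] <;> abel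

/-- The symmetric equivalence is also bracket preserving. -/
private lemma heis_symm
    (f : (V × Z × A) ≃ₗ[K] (V × Z × A))
    (hf : ∀ p q : V × Z × A, f (0, β p.1 q.1, 0) = (0, β (f p).1 (f q).1, 0)) :
    ∀ p q : V × Z × A,
      f.symm (0, β p.1 q.1, 0) = (0, β (f.symm p).1 (f.symm q).1, 0) := by
  intro p q
  apply f.injective
  rw [LinearEquiv.apply_symm_apply, hf (f.symm p) (f.symm q)]
  simp

/-- The three "inverse" identities. -/
private lemma heis_inv
    (hspan : Submodule.span K {z : Z | ∃ u w : V, β u w = z} = ⊤)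
    (hred : ∀ v : V, (∀ w : V, β v w = 0) → v = 0)
    (f : (V × Z × A) ≃ₗ[K] (V × Z × A))
    (hf : ∀ p q : V × Z × A, f (0, β p.1 q.1, 0) = (0, β (f p).1 (f q).1, 0)) :
    (∀ v : V, (f ((f.symm (v, 0, 0)).1, 0, 0)).1 = v) ∧
    (∀ z : Z, (f (0, (f.symm (0, z, 0)).2.1, 0)).2.1 = z) ∧
    (∀ a : A, (f (0, 0, (f.symm (0, 0, a)).2.2)).2.2 = a) := by
  have hg := heis_symm β f hf
  refine ⟨fun v => ?_, fun z => ?_, fun a => ?_⟩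
  · set p := f.symm ((v : V), (0 : Z), (0 : A)) with hp
    have hfp : f (p.1, p.2.1, p.2.2) = (v, 0, 0) := by
      rw [show ((p.1, p.2.1, p.2.2) : V × Z × A) = p from rfl, hp,
        LinearEquiv.apply_symm_apply]
    rw [heis_decomp β hspan hred f hf] at hfp
    exact (Prod.ext_iff.mp hfp).1
  · set p := f.symm ((0 : V), (z : Z), (0 : A)) with hp
    have hp1 : p.1 = 0 := heis_fact1 β hred f.symm hg z 0
    have hp3 : p.2.2 = 0 := heis_fact2 β hspan f.symm hg z
    have hfp : f (p.1, p.2.1, p.2.2) = (0, z, 0) := by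
      rw [show ((p.1, p.2.1, p.2.2) : V × Z × A) = p from rfl, hp,
        LinearEquiv.apply_symm_apply]
    rw [heis_decomp β hspan hred f hf, hp1, hp3] at hfp
    have h2 := (Prod.ext_iff.mp (Prod.ext_iff.mp hfp).2).1
    have h00 : f ((0 : V), (0 : Z), (0 : A)) = 0 := by
      rw [show ((0 : V), (0 : Z), (0 : A)) = (0 : V × Z × A) from rfl, map_zero]
    simp only [h00] at h2
    simpa using h2
  · set p := f.symm ((0 : V), (0 : Z), (a : A)) with hp
    have hp1 : p.1 = 0 := heis_fact1 β hred f.symm hg 0 a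
    have hfp : f (p.1, p.2.1, p.2.2) = (0, 0, a) := by
      rw [show ((p.1, p.2.1, p.2.2) : V × Z × A) = p from rfl, hp,
        LinearEquiv.apply_symm_apply]
    rw [heis_decomp β hspan hred f hf, hp1] at hfp
    have h3 := (Prod.ext_iff.mp (Prod.ext_iff.mp hfp).2).2
    have h00 : f ((0 : V), (0 : Z), (0 : A)) = 0 := by
      rw [show ((0 : V), (0 : Z), (0 : A)) = (0 : V × Z × A) from rfl, map_zero]
    simp only [h00] at h3
    simpa using h3

end Aux

/-- Automorphisms of the Lie algebra h(V,Z,β) × A, for a reduced Heisenberg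
algebra h(V,Z,β) and an abelian Lie algebra A, are precisely the maps
(v,z,a) ↦ (σ v, σ' z + τ v + ζ a, α a + ξ v). -/
theorem heisenberg_automorphisms (β : V →ₗ[K] V →ₗ[K] Z) (halt : ∀ v : V, β v v = 0)
    (hspan : Submodule.span K {z : Z | ∃ u w : V, β u w = z} = ⊤)
    (hred : ∀ v : V, (∀ w : V, β v w = 0) → v = 0)
    (f : (V × Z × A) ≃ₗ[K] (V × Z × A)) :
    letI := heisLieRing (A := A) β halt
    ((∀ p q : V × Z × A, f ⁅p, q⁆ = ⁅f p, f q⁆) ↔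
      ∃ (σ : V ≃ₗ[K] V) (σ' : Z ≃ₗ[K] Z) (τ : V →ₗ[K] Z) (ζ : A →ₗ[K] Z)
        (α : A ≃ₗ[K] A) (ξ : V →ₗ[K] A),
        (∀ u w : V, σ' (β u w) = β (σ u) (σ w)) ∧
        ∀ (v : V) (z : Z) (a : A), f (v, z, a) = (σ v, σ' z + τ v + ζ a, α a + ξ v)) := by
  letI := heisLieRing (A := A) β halt
  constructor
  · intro hf
    have hf' : ∀ p q : V × Z × A, f (0, β p.1 q.1, 0) = (0, β (f p).1 (f q).1, 0) :=
      fun p q => hf p q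
    have hg' := heis_symm β f hf'
    obtain ⟨hiV, hiZ, hiA⟩ := heis_inv β hspan hred f hf'
    have hsymm : f.symm.symm = f := f.symm_symm
    obtain ⟨hiV', hiZ', hiA'⟩ := heis_inv β hspan hred f.symm hg'
    rw [hsymm] at hiV' hiZ' hiA'
    -- component linear maps
    let iV : V →ₗ[K] (V × Z × A) := LinearMap.inl K V (Z × A)
    let iZ : Z →ₗ[K] (V × Z × A) := (LinearMap.inr K V (Z × A)).comp (LinearMap.inl K Z A)
    let iA : A →ₗ[K] (V × Z × A) := (LinearMap.inr K V (Z × A)).comp (LinearMap.inr K Z A)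
    let pV : (V × Z × A) →ₗ[K] V := LinearMap.fst K V (Z × A)
    let pZ : (V × Z × A) →ₗ[K] Z := (LinearMap.fst K Z A).comp (LinearMap.snd K V (Z × A))
    let pA : (V × Z × A) →ₗ[K] A := (LinearMap.snd K Z A).comp (LinearMap.snd K V (Z × A))
    refine ⟨LinearEquiv.ofLinear (pV.comp (f.toLinearMap.comp iV))
        (pV.comp (f.symm.toLinearMap.comp iV)) ?_ ?_,
      LinearEquiv.ofLinear (pZ.comp (f.toLinearMap.comp iZ))
        (pZ.comp (f.symm.toLinearMap.comp iZ)) ?_ ?_,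
      pZ.comp (f.toLinearMap.comp iV),
      pZ.comp (f.toLinearMap.comp iA),
      LinearEquiv.ofLinear (pA.comp (f.toLinearMap.comp iA))
        (pA.comp (f.symm.toLinearMap.comp iA)) ?_ ?_,
      pA.comp (f.toLinearMap.comp iV), ?_, ?_⟩
    · exact LinearMap.ext fun v => hiV v
    · exact LinearMap.ext fun v => hiV' v
    · exact LinearMap.ext fun z => hiZ z
    · exact LinearMap.ext fun z => hiZ' z
    · exact LinearMap.ext fun a => hiA a
    · exact LinearMap.ext fun a => hiA' a
    · intro u w
      have h := hf' (u, 0, 0) (w, 0, 0)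
      have h' : β (((u : V), (0 : Z), (0 : A)).1) (((w : V), (0 : Z), (0 : A)).1)
          = β u w := rfl
      rw [h'] at h
      have := (Prod.ext_iff.mp (Prod.ext_iff.mp h).2).1
      simpa [LinearEquiv.ofLinear_apply, pZ, pV, iZ, iV, Prod.mk_zero_zero] using this
    · intro v z a
      rw [heis_decomp β hspan hred f hf' v z a]
      simp only [LinearEquiv.ofLinear_apply, LinearMap.comp_apply]
      rfl
  · rintro ⟨σ, σ', τ, ζ, α, ξ, hrel, hform⟩
    intro p q
    show f ((0 : V), β p.1 q.1, (0 : A)) = ((0 : V), β (f p).1 (f q).1, (0 : A))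
    have hp : (f p).1 = σ p.1 := by
      rw [show p = (p.1, p.2.1, p.2.2) from rfl, hform]
    have hq : (f q).1 = σ q.1 := by
      rw [show q = (q.1, q.2.1, q.2.2) from rfl, hform]
    rw [hform, hp, hq, ← hrel]
    simp [Prod.ext_iff]
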